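/- arXiv:1905.02445 — 2 statements merged into one kernel-verified Lean document; each statement's English description precedes it below -/
import Mathlib

section
/- Let G ⊆ K_{m,n} be a connected bipartite graph, let a ∈ U₁ with A = U₁ ∖ {a} a first independent set, and let C = C₁ ⊔ C₂ be a two-sided first independent set of G. Then the intersection subgraph G{A} ∩ G{C} (the spanning subgraph whose edges are the common edges of G{A} and G{C}) has exactly three connected components (isolated vertices counting as components) — equivalently, the corresponding pair of extremal rays spans a two-dimensional face of the edge cone — if and only if one of the following holds: (1) C₁ = {a} and C₂ = U₂ ∖ {v} for some vertex v ∈ U₂; (2) C₁ ⊆ U₁ ∖ {a} and the induced subgraph G[C₂ ⊔ (N(C₂) ∖ {a})] is connected; (3) N(C₂) ⊆ U₁ ∖ {a} and the induced subgraph G[(C₁ ∖ {a}) ⊔ N(C₁)] is connected. -/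
open Sum Finset SimpleGraph

section Helpers

variable {V : Type*} [Finite V]

lemma nat_card_sigma {ι : Type*} [Fintype ι] (α : ι → Type*) [∀ i, Finite (α i)] :
    Nat.card (Σ i, α i) = ∑ i, Nat.card (α i) := by
  classical
  letI : ∀ i, Fintype (α i) := fun i => Fintype.ofFinite _
  simp [Nat.card_eq_fintype_card, Fintype.card_sigma]

lemma connected_iff_card_cc (G : SimpleGraph V) :
    Nat.card G.ConnectedComponent = 1 ↔ G.Connected := by
  rw [Nat.card_eq_one_iff_unique, SimpleGraph.connected_iff]
  constructor
  · rintro ⟨hsub, ⟨c⟩⟩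
    obtain ⟨v, -⟩ := c.exists_rep
    exact ⟨fun u w => SimpleGraph.ConnectedComponent.exact (Subsingleton.elim _ _), ⟨v⟩⟩
  · rintro ⟨hpre, ⟨v⟩⟩
    refine ⟨⟨fun c d => ?_⟩, ⟨G.connectedComponentMk v⟩⟩
    obtain ⟨u, rfl⟩ := c.exists_rep
    obtain ⟨w, rfl⟩ := d.exists_rep
    exact SimpleGraph.ConnectedComponent.sound (hpre u w)

lemma f_eq_of_reachable {G : SimpleGraph V} {β : Type*} {f : V → β}
    (hf : ∀ u v, G.Adj u v → f u = f v) {u v : V} (h : G.Reachable u v) : f u = f v := by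
  obtain ⟨p⟩ := h
  induction p with
  | nil => rfl
  | cons h p ih => exact (hf _ _ h).trans ih

lemma reachable_induce_of_walk {G : SimpleGraph V} {β : Type*} {f : V → β}
    (hf : ∀ u v, G.Adj u v → f u = f v) {i : β} {u v : V} (p : G.Walk u v)
    (hu : f u = i) (hv : f v = i) :
    (G.induce {w | f w = i}).Reachable ⟨u, hu⟩ ⟨v, hv⟩ := by
  induction p with
  | nil => rfl
  | @cons a b c h p ih =>
    have hb : f b = i := (hf _ _ h).symm.trans hu
    exact (SimpleGraph.Reachable.refl _).trans
      ((SimpleGraph.Adj.reachable (by exact h : (G.induce {w | f w = i}).Adj ⟨a, hu⟩ ⟨b, hb⟩)).trans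
        (ih hb hv))

lemma card_cc_eq_sum (G : SimpleGraph V) {k : ℕ} (f : V → Fin k)
    (hf : ∀ u v, G.Adj u v → f u = f v) :
    Nat.card G.ConnectedComponent
      = ∑ i : Fin k, Nat.card ((G.induce {v | f v = i}).ConnectedComponent) := by
  classical
  rw [← nat_card_sigma]
  refine (Nat.card_congr (Equiv.ofBijective
    (fun c : Σ i : Fin k, (G.induce {v | f v = i}).ConnectedComponent =>
      c.2.map (SimpleGraph.Embedding.induce {v | f v = c.1}).toHom) ⟨?_, ?_⟩)).symm
  · rintro ⟨i, c⟩ ⟨i', c'⟩ h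
    obtain ⟨⟨u, hu⟩, rfl⟩ := c.exists_rep
    obtain ⟨⟨v, hv⟩, rfl⟩ := c'.exists_rep
    simp only [SimpleGraph.ConnectedComponent.map_mk] at h
    have hreach : G.Reachable u v := SimpleGraph.ConnectedComponent.exact h
    have hiv : i = i' := by rw [← hu, ← hv]; exact f_eq_of_reachable hf hreach
    subst hiv
    obtain ⟨p⟩ := hreach
    exact Sigma.ext rfl (heq_of_eq
      (SimpleGraph.ConnectedComponent.sound (reachable_induce_of_walk hf p hu hv)))
  · intro c
    obtain ⟨v, rfl⟩ := c.exists_rep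
    exact ⟨⟨f v, (G.induce {w | f w = f v}).connectedComponentMk ⟨v, rfl⟩⟩, rfl⟩

lemma card_cc_eq_iff (G : SimpleGraph V) {k : ℕ} (f : V → Fin k)
    (hf : ∀ u v, G.Adj u v → f u = f v) (hne : ∀ i, ∃ v, f v = i) :
    Nat.card G.ConnectedComponent = k ↔ ∀ i, (G.induce {v | f v = i}).Connected := by
  rw [card_cc_eq_sum G f hf]
  have hpos : ∀ i : Fin k, 1 ≤ Nat.card ((G.induce {v | f v = i}).ConnectedComponent) := by
    intro i
    obtain ⟨v, hv⟩ := hne i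
    have : Nonempty ((G.induce {v | f v = i}).ConnectedComponent) :=
      ⟨(G.induce {w | f w = i}).connectedComponentMk ⟨v, hv⟩⟩
    exact Nat.one_le_iff_ne_zero.mpr (Nat.card_ne_zero.mpr ⟨this, inferInstance⟩)
  have h1 : (∑ _i : Fin k, 1) = k := by simp
  constructor
  · intro h i
    rw [← connected_iff_card_cc]
    exact ((Finset.sum_eq_sum_iff_of_le (fun i _ => hpos i)).mp
      (h1.trans h.symm) i (Finset.mem_univ i)).symm
  · intro h
    rw [Finset.sum_congr rfl fun i _ => (connected_iff_card_cc _).mpr (h i)]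
    exact h1

end Helpers



/-!
Common setup: a bipartite graph `G ⊆ K_{m,n}` is encoded by an edge relation
`E : Fin m → Fin n → Prop` (vertex set `V = Fin m ⊕ Fin n`, with `U₁` the left
summand and `U₂` the right summand).
-/

namespace ToricBipartite

open Sum Finset

variable {m n : ℕ}

/-- The simple graph on `Fin m ⊕ Fin n` determined by the bipartite edge relation `E`. -/
def toGraph (E : Fin m → Fin n → Prop) : SimpleGraph (Fin m ⊕ Fin n) where
  Adj u v :=
    (∃ i j, u = inl i ∧ v = inr j ∧ E i j) ∨ (∃ i j, u = inr j ∧ v = inl i ∧ E i j)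
  symm := by
    constructor
    rintro u v (⟨i, j, hu, hv, h⟩ | ⟨i, j, hu, hv, h⟩)
    · exact Or.inr ⟨i, j, hv, hu, h⟩
    · exact Or.inl ⟨i, j, hv, hu, h⟩
  loopless := by
    constructor
    rintro u (⟨i, j, hu, hv, h⟩ | ⟨i, j, hu, hv, h⟩) <;> rw [hu] at hv <;> simp at hv

/-- The generator `e^i + f^j` of the dual edge cone. -/
def gen (i : Fin m) (j : Fin n) : (Fin m ⊕ Fin n) → ℝ :=
  Pi.single (inl i) 1 + Pi.single (inr j) 1

/-- The set of generators `{e^i + f^j : (i, m+j) ∈ E(G)}` of the dual edge cone. -/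
def genSet (E : Fin m → Fin n → Prop) : Set ((Fin m ⊕ Fin n) → ℝ) :=
  {x | ∃ i j, E i j ∧ x = gen i j}

/-- The dual edge cone `σ_G^∨ ⊆ ℝ^{m+n}`: all nonnegative combinations of the
generators `e^i + f^j` over the edges of `G`. -/
def dualEdgeCone (E : Fin m → Fin n → Prop) : Set ((Fin m ⊕ Fin n) → ℝ) :=
  {x | ∃ c : Fin m → Fin n → ℝ, (∀ i j, 0 ≤ c i j) ∧ (∀ i j, c i j ≠ 0 → E i j) ∧
      x = ∑ i, ∑ j, c i j • gen i j}

/-- The neighbour set `N(A) ⊆ U₂` of a set `A ⊆ U₁`. -/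
def nbrR (E : Fin m → Fin n → Prop) [∀ i j, Decidable (E i j)]
    (A : Finset (Fin m)) : Finset (Fin n) :=
  univ.filter fun j => ∃ i ∈ A, E i j

/-- The neighbour set `N(B) ⊆ U₁` of a set `B ⊆ U₂`. -/
def nbrL (E : Fin m → Fin n → Prop) [∀ i j, Decidable (E i j)]
    (B : Finset (Fin n)) : Finset (Fin m) :=
  univ.filter fun i => ∃ j ∈ B, E i j

/-- `A₁ ⊔ A₂ ⊆ U₁ ⊔ U₂` contains no pair of adjacent vertices (since the graph is
bipartite this says there is no edge between `A₁` and `A₂`). -/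
def IsIndepPair (E : Fin m → Fin n → Prop)
    (A₁ : Finset (Fin m)) (A₂ : Finset (Fin n)) : Prop :=
  ∀ i ∈ A₁, ∀ j ∈ A₂, ¬ E i j

/-- A two-sided independent set `B₁ ⊔ B₂`, with `∅ ≠ B₁ ⊊ U₁` and `∅ ≠ B₂ ⊊ U₂`. -/
def TwoSidedIndep (E : Fin m → Fin n → Prop)
    (B₁ : Finset (Fin m)) (B₂ : Finset (Fin n)) : Prop :=
  B₁.Nonempty ∧ B₁ ≠ univ ∧ B₂.Nonempty ∧ B₂ ≠ univ ∧ IsIndepPair E B₁ B₂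

/-- A two-sided *maximal* independent set: two-sided independent, and contained in no
strictly larger independent set of the graph. -/
def TwoSidedMaxIndep (E : Fin m → Fin n → Prop)
    (A₁ : Finset (Fin m)) (A₂ : Finset (Fin n)) : Prop :=
  TwoSidedIndep E A₁ A₂ ∧
    ∀ B₁ B₂, IsIndepPair E B₁ B₂ → A₁ ⊆ B₁ → A₂ ⊆ B₂ → B₁ = A₁ ∧ B₂ = A₂

/-- Membership in `I_G^(*)`: either a two-sided maximal independent set, or a one-sided
independent set of the form `U_i ∖ {v}` not contained in any two-sided independent set.
A set is encoded as the pair of its parts `(A₁, A₂) = (A ∩ U₁, A ∩ U₂)`. -/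
def InIStar (E : Fin m → Fin n → Prop)
    (A₁ : Finset (Fin m)) (A₂ : Finset (Fin n)) : Prop :=
  TwoSidedMaxIndep E A₁ A₂ ∨
    (A₂ = ∅ ∧ A₁.Nonempty ∧ (∃ v, A₁ = {v}ᶜ) ∧
      ¬ ∃ B₁ B₂, TwoSidedIndep E B₁ B₂ ∧ A₁ ⊆ B₁) ∨
    (A₁ = ∅ ∧ A₂.Nonempty ∧ (∃ v, A₂ = {v}ᶜ) ∧
      ¬ ∃ B₁ B₂, TwoSidedIndep E B₁ B₂ ∧ A₂ ⊆ B₂)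

/-- The edge relation of the associated (spanning) subgraph `G{A}` of `A ∈ I_G^(*)`:
for one-sided `A = A₁ ⊆ U₁` the edges of `G[A₁ ⊔ N(A₁)] ⊔ G[(U₁∖A₁) ⊔ (U₂∖N(A₁))]`,
symmetrically for one-sided `A = A₂ ⊆ U₂`, and for two-sided `A = A₁ ⊔ A₂` the edges of
`G[A₁ ⊔ N(A₁)] ⊔ G[A₂ ⊔ N(A₂)]`. -/
def assoc (E : Fin m → Fin n → Prop) [∀ i j, Decidable (E i j)]
    (A₁ : Finset (Fin m)) (A₂ : Finset (Fin n)) : Fin m → Fin n → Prop := fun i j =>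
  E i j ∧
    (if A₂ = ∅ then i ∈ A₁ ∨ j ∉ nbrR E A₁
     else if A₁ = ∅ then j ∈ A₂ ∨ i ∉ nbrL E A₂
     else i ∈ A₁ ∨ j ∈ A₂)

instance (E : Fin m → Fin n → Prop) [∀ i j, Decidable (E i j)]
    (A₁ : Finset (Fin m)) (A₂ : Finset (Fin n)) (i : Fin m) (j : Fin n) :
    Decidable (assoc E A₁ A₂ i j) := by
  unfold assoc; infer_instance

/-- The number of connected components of the bipartite graph with edge relation `E`
(isolated vertices count as connected components). -/
noncomputable def numComponents (E : Fin m → Fin n → Prop) : ℕ :=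
  Nat.card (toGraph E).ConnectedComponent

/-- `A ∈ I_G^(1)`: a first independent set, i.e. an element of `I_G^(*)` whose associated
subgraph `G{A}` has exactly two connected components. -/
def FirstIndep (E : Fin m → Fin n → Prop) [∀ i j, Decidable (E i j)]
    (A₁ : Finset (Fin m)) (A₂ : Finset (Fin n)) : Prop :=
  InIStar E A₁ A₂ ∧ numComponents (assoc E A₁ A₂) = 2

/-- The supporting hyperplane `H_{A₁}` of a one-sided set `A₁ ⊆ U₁`:
`Σ_{v ∈ A₁} x_v = Σ_{v ∈ N(A₁)} x_v`. -/
def hyp1 (E : Fin m → Fin n → Prop) [∀ i j, Decidable (E i j)]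
    (A₁ : Finset (Fin m)) : Set ((Fin m ⊕ Fin n) → ℝ) :=
  {x | ∑ i ∈ A₁, x (inl i) = ∑ j ∈ nbrR E A₁, x (inr j)}

/-- The supporting hyperplane `H_{A₂}` of a one-sided set `A₂ ⊆ U₂`. -/
def hyp2 (E : Fin m → Fin n → Prop) [∀ i j, Decidable (E i j)]
    (A₂ : Finset (Fin n)) : Set ((Fin m ⊕ Fin n) → ℝ) :=
  {x | ∑ j ∈ A₂, x (inr j) = ∑ i ∈ nbrL E A₂, x (inl i)}

/-- The supporting hyperplane `H_A` of `A = A₁ ⊔ A₂`, taken with respect to a nonempty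
one-sided part of `A`. -/
def hypA (E : Fin m → Fin n → Prop) [∀ i j, Decidable (E i j)]
    (A₁ : Finset (Fin m)) (A₂ : Finset (Fin n)) : Set ((Fin m ⊕ Fin n) → ℝ) :=
  if A₁ = ∅ then hyp2 E A₂ else hyp1 E A₁

/-- Connectivity of the induced subgraph `G[S ⊔ T]` for `S ⊆ U₁`, `T ⊆ U₂`. -/
def InducedConnected (E : Fin m → Fin n → Prop)
    (S : Finset (Fin m)) (T : Finset (Fin n)) : Prop :=
  ((toGraph E).induce
    ((inl '' (S : Set (Fin m)) ∪ inr '' (T : Set (Fin n))) : Set (Fin m ⊕ Fin n))).Connected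

/-- The degree (valency) sequence of the bipartite graph with edge relation `E`,
as a vector in `ℝ^{m+n}`. -/
def valVec (E : Fin m → Fin n → Prop) [∀ i j, Decidable (E i j)] :
    (Fin m ⊕ Fin n) → ℝ :=
  Sum.elim (fun i => ((univ.filter fun j => E i j).card : ℝ))
    (fun j => ((univ.filter fun i => E i j).card : ℝ))

section MainLemmas

variable {E : Fin m → Fin n → Prop}

lemma toGraph_adj_inl_inr {i : Fin m} {j : Fin n} :
    (toGraph E).Adj (inl i) (inr j) ↔ E i j := by
  constructor
  · rintro (⟨i', j', h1, h2, h⟩ | ⟨i', j', h1, h2, h⟩) <;> simp_all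
  · intro h; exact Or.inl ⟨i, j, rfl, rfl, h⟩

lemma toGraph_adj_inr_inl {i : Fin m} {j : Fin n} :
    (toGraph E).Adj (inr j) (inl i) ↔ E i j := by
  constructor
  · rintro (⟨i', j', h1, h2, h⟩ | ⟨i', j', h1, h2, h⟩) <;> simp_all
  · intro h; exact Or.inr ⟨i, j, rfl, rfl, h⟩

lemma not_toGraph_adj_inl_inl {i i' : Fin m} :
    ¬ (toGraph E).Adj (inl i) (inl i') := by
  rintro (⟨i', j', h1, h2, h⟩ | ⟨i', j', h1, h2, h⟩) <;> simp_all

lemma not_toGraph_adj_inr_inr {j j' : Fin n} :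
    ¬ (toGraph E).Adj (inr j) (inr j') := by
  rintro (⟨i', j', h1, h2, h⟩ | ⟨i', j', h1, h2, h⟩) <;> simp_all

lemma induce_eq_of_adj_on {V : Type*} {G G' : SimpleGraph V} (S : Set V)
    (h : ∀ u ∈ S, ∀ v ∈ S, (G.Adj u v ↔ G'.Adj u v)) : G.induce S = G'.induce S := by
  ext ⟨u, hu⟩ ⟨v, hv⟩
  exact h u hu v hv

lemma induce_singleton_connected {V : Type*} (G : SimpleGraph V) (x : V) :
    (G.induce {x}).Connected := by
  rw [SimpleGraph.connected_iff]
  refine ⟨fun u v => ?_, ⟨⟨x, rfl⟩⟩⟩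
  have : u = v := Subtype.ext (u.2.trans v.2.symm)
  rw [this]

end MainLemmas

/-- Let `A = U₁ ∖ {a}` be a first independent set and `C = C₁ ⊔ C₂` a
two-sided first independent set of a connected bipartite graph `G ⊆ K_{m,n}`. Then the
intersection subgraph `G{A} ∩ G{C}` has exactly three connected components
(equivalently, the corresponding pair of extremal rays spans a 2-face of the edge cone)
if and only if one of the following holds:
(1) `C₁ = {a}` and `C₂ = U₂ ∖ {v}` for some `v`;
(2) `C₁ ⊆ U₁ ∖ {a}` and `G[C₂ ⊔ (N(C₂) ∖ {a})]` is connected;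
(3) `N(C₂) ⊆ U₁ ∖ {a}` and `G[(C₁ ∖ {a}) ⊔ N(C₁)]` is connected. -/


theorem two_face_AC (m n : ℕ) (E : Fin m → Fin n → Prop)
    [∀ i j, Decidable (E i j)] (hconn : (toGraph E).Connected)
    (a : Fin m) (hA : FirstIndep E ({a}ᶜ) ∅)
    (C₁ : Finset (Fin m)) (C₂ : Finset (Fin n))
    (hC₁ : C₁.Nonempty) (hC₂ : C₂.Nonempty) (hC : FirstIndep E C₁ C₂) :
    numComponents (fun i j => assoc E ({a}ᶜ) ∅ i j ∧ assoc E C₁ C₂ i j) = 3 ↔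
      ((C₁ = {a} ∧ ∃ v, C₂ = {v}ᶜ) ∨
        (a ∉ C₁ ∧ InducedConnected E ((nbrL E C₂).erase a) C₂) ∨
        (a ∉ nbrL E C₂ ∧ InducedConnected E (C₁.erase a) (nbrR E C₁))) := by
  classical
  -- Unpack hC.
  obtain ⟨hCstar, hC2cc⟩ := hC
  have hCmax : TwoSidedMaxIndep E C₁ C₂ := by
    rcases hCstar with h | ⟨h2, _⟩ | ⟨h1, _⟩
    · exact h
    · exact absurd h2 hC₂.ne_empty
    · exact absurd h1 hC₁.ne_empty
  obtain ⟨⟨-, hC1u, -, hC2u, hindep⟩, hmax⟩ := hCmax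
  obtain ⟨x, hx⟩ := hC₁
  obtain ⟨u0, hu0⟩ := hC₂
  have hy : ∃ y, y ∉ C₁ := by
    by_contra h; push_neg at h
    exact hC1u (Finset.eq_univ_iff_forall.mpr h)
  obtain ⟨y, hy⟩ := hy
  have hw : ∃ w, w ∉ C₂ := by
    by_contra h; push_neg at h
    exact hC2u (Finset.eq_univ_iff_forall.mpr h)
  obtain ⟨w0, hw0⟩ := hw
  -- Neighbour identities from maximality.
  have hNL : nbrL E C₂ = C₁ᶜ := by
    ext i
    simp only [nbrL, Finset.mem_filter, Finset.mem_univ, true_and, Finset.mem_compl]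
    constructor
    · rintro ⟨j, hj, hEij⟩ hiC₁; exact hindep i hiC₁ j hj hEij
    · intro hi
      by_contra hno
      push_neg at hno
      have hind : IsIndepPair E (insert i C₁) C₂ := by
        intro i' hi' j hj
        rcases Finset.mem_insert.mp hi' with rfl | hi'
        · exact fun hE => hno j hj hE
        · exact hindep i' hi' j hj
      have := (hmax _ _ hind (Finset.subset_insert _ _) (subset_refl _)).1
      exact hi (this ▸ Finset.mem_insert_self i C₁)
  have hNR : nbrR E C₁ = C₂ᶜ := by
    ext j
    simp only [nbrR, Finset.mem_filter, Finset.mem_univ, true_and, Finset.mem_compl]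
    constructor
    · rintro ⟨i, hi, hEij⟩ hjC₂; exact hindep i hi j hjC₂ hEij
    · intro hj
      by_contra hno
      push_neg at hno
      have hind : IsIndepPair E C₁ (insert j C₂) := by
        intro i hi j' hj'
        rcases Finset.mem_insert.mp hj' with rfl | hj'
        · exact fun hE => hno i hi hE
        · exact hindep i hi j' hj'
      have := (hmax _ _ hind (subset_refl _) (Finset.subset_insert _ _)).2
      exact hj (this ▸ Finset.mem_insert_self j C₂)
  -- Unpack hA : the neighbours of `U₁ \ {a}` are everything.
  have hA1ne : ({a}ᶜ : Finset (Fin m)).Nonempty := by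
    rcases eq_or_ne x a with rfl | hxa
    · refine ⟨y, ?_⟩
      simp only [Finset.mem_compl, Finset.mem_singleton]
      rintro rfl; exact hy hx
    · exact ⟨x, by simp [hxa]⟩
  have hjne : ∀ j : Fin n, ({j} : Finset (Fin n)) ≠ Finset.univ := by
    intro j h
    have h1 : u0 = j := by
      have := Finset.mem_univ u0; rw [← h] at this; simpa using this
    have h2 : w0 = j := by
      have := Finset.mem_univ w0; rw [← h] at this; simpa using this
    exact hw0 (h1.trans h2.symm ▸ hu0)
  obtain ⟨hAstar, -⟩ := hA
  have hnA : ¬ ∃ B₁ B₂, TwoSidedIndep E B₁ B₂ ∧ ({a}ᶜ : Finset (Fin m)) ⊆ B₁ := by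
    rcases hAstar with ⟨⟨-, -, h, -, -⟩, -⟩ | ⟨-, -, -, h⟩ | ⟨h1, -, -, -⟩
    · exact absurd h (by simp [Finset.Nonempty])
    · exact h
    · exact absurd h1 hA1ne.ne_empty
  have hNA : nbrR E ({a}ᶜ : Finset (Fin m)) = Finset.univ := by
    ext j
    simp only [nbrR, Finset.mem_filter, Finset.mem_univ, true_and, iff_true]
    by_contra hno
    push_neg at hno
    refine hnA ⟨{a}ᶜ, {j}, ⟨hA1ne, ?_, ⟨j, Finset.mem_singleton_self j⟩, hjne j, ?_⟩, subset_refl _⟩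
    · intro h
      have := Finset.mem_univ a; rw [← h] at this; simp at this
    · intro i hi j' hj'
      rw [Finset.mem_singleton] at hj'
      subst hj'
      exact fun hE => (hno i hi) hE
  -- Adjacency characterisations.
  have hC2e : C₂ ≠ ∅ := Finset.ne_empty_of_mem hu0
  have hC1e : C₁ ≠ ∅ := Finset.ne_empty_of_mem hx
  have hassocC : ∀ i j, assoc E C₁ C₂ i j ↔ E i j ∧ (i ∈ C₁ ∨ j ∈ C₂) := by
    intro i j
    simp [assoc, hC2e, hC1e]
  have hassocA : ∀ i j, assoc E ({a}ᶜ) ∅ i j ↔ E i j ∧ i ≠ a := by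
    intro i j
    simp [assoc, hNA]
  have hH : ∀ i j, (assoc E ({a}ᶜ) ∅ i j ∧ assoc E C₁ C₂ i j) ↔
      (E i j ∧ i ≠ a ∧ (i ∈ C₁ ∨ j ∈ C₂)) := by
    intro i j
    rw [hassocA, hassocC]
    tauto
  -- The two components of G{C}.
  set f₂ : (Fin m ⊕ Fin n) → Fin 2 :=
    Sum.elim (fun i => if i ∈ C₁ then 0 else 1) (fun j => if j ∈ C₂ then 1 else 0) with hf₂def
  have hf₂ : ∀ v v', (toGraph (assoc E C₁ C₂)).Adj v v' → f₂ v = f₂ v' := by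
    have key : ∀ (i : Fin m) (j : Fin n), assoc E C₁ C₂ i j → f₂ (inl i) = f₂ (inr j) := by
      intro i j h
      rw [hassocC] at h
      obtain ⟨hE, hor⟩ := h
      by_cases hi : i ∈ C₁
      · have hj : j ∉ C₂ := fun hj => hindep i hi j hj hE
        simp [hf₂def, hi, hj]
      · have hj : j ∈ C₂ := hor.resolve_left hi
        simp [hf₂def, hi, hj]
    rintro v v' (⟨i, j, rfl, rfl, h⟩ | ⟨i, j, rfl, rfl, h⟩)
    · exact key i j h
    · exact (key i j h).symm
  have hQ : ∀ i, ((toGraph (assoc E C₁ C₂)).induce {v | f₂ v = i}).Connected := by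
    refine (card_cc_eq_iff _ f₂ hf₂ ?_).mp hC2cc
    intro i
    fin_cases i
    · exact ⟨inl x, by simp [hf₂def, hx]⟩
    · exact ⟨inr u0, by simp [hf₂def, hu0]⟩
  -- The three parts of `G{A} ∩ G{C}`.
  set f₃ : (Fin m ⊕ Fin n) → Fin 3 :=
    Sum.elim (fun i => if i = a then 0 else if i ∈ C₁ then 1 else 2)
      (fun j => if j ∈ C₂ then 2 else 1) with hf₃def
  set H : SimpleGraph (Fin m ⊕ Fin n) :=
    toGraph (fun i j => assoc E ({a}ᶜ) ∅ i j ∧ assoc E C₁ C₂ i j) with hHdef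
  have hHadj : ∀ i j, H.Adj (inl i) (inr j) ↔ (E i j ∧ i ≠ a ∧ (i ∈ C₁ ∨ j ∈ C₂)) := by
    intro i j
    rw [hHdef, toGraph_adj_inl_inr, hH]
  have hf₃ : ∀ v v', H.Adj v v' → f₃ v = f₃ v' := by
    have key : ∀ (i : Fin m) (j : Fin n),
        (assoc E ({a}ᶜ) ∅ i j ∧ assoc E C₁ C₂ i j) → f₃ (inl i) = f₃ (inr j) := by
      intro i j h
      rw [hH] at h
      obtain ⟨hE, hia, hor⟩ := h
      by_cases hi : i ∈ C₁
      · have hj : j ∉ C₂ := fun hj => hindep i hi j hj hE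
        simp [hf₃def, hi, hj, hia]
      · have hj : j ∈ C₂ := hor.resolve_left hi
        simp [hf₃def, hi, hj, hia]
    rintro v v' (⟨i, j, rfl, rfl, h⟩ | ⟨i, j, rfl, rfl, h⟩)
    · exact key i j h
    · exact (key i j h).symm
  have hLHS : numComponents (fun i j => assoc E ({a}ᶜ) ∅ i j ∧ assoc E C₁ C₂ i j) = 3 ↔
      ∀ i, (H.induce {v | f₃ v = i}).Connected := by
    refine card_cc_eq_iff _ f₃ hf₃ ?_
    intro i
    fin_cases i
    · exact ⟨inl a, by simp [hf₃def]⟩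
    · exact ⟨inr w0, by simp [hf₃def, hw0]⟩
    · exact ⟨inr u0, by simp [hf₃def, hu0]⟩
  -- fiber 0 is the singleton `{inl a}`
  have hfib0 : {v | f₃ v = 0} = ({inl a} : Set (Fin m ⊕ Fin n)) := by
    ext v
    simp only [Set.mem_setOf_eq, Set.mem_singleton_iff, hf₃def]
    cases v with
    | inl i =>
      simp only [Sum.elim_inl, Sum.inl.injEq]
      split_ifs with h1 h2 <;> simp [h1]
    | inr j =>
      simp only [Sum.elim_inr]
      split_ifs with h1 <;> simp
  have hfib0conn : (H.induce {v | f₃ v = 0}).Connected := by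
    rw [hfib0]; exact induce_singleton_connected H (inl a)
  have hLHS' : numComponents (fun i j => assoc E ({a}ᶜ) ∅ i j ∧ assoc E C₁ C₂ i j) = 3 ↔
      ((H.induce {v | f₃ v = 1}).Connected ∧ (H.induce {v | f₃ v = 2}).Connected) := by
    rw [hLHS]
    constructor
    · intro h; exact ⟨h 1, h 2⟩
    · rintro ⟨h1, h2⟩ i
      fin_cases i
      · exact hfib0conn
      · exact h1
      · exact h2
  -- membership characterisations for the fibers
  have h3l1 : ∀ i : Fin m, f₃ (inl i) = 1 ↔ (i ≠ a ∧ i ∈ C₁) := by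
    intro i; rw [hf₃def]; simp only [Sum.elim_inl]
    by_cases h1 : i = a <;> by_cases h2 : i ∈ C₁ <;> simp [h1, h2]
  have h3l2 : ∀ i : Fin m, f₃ (inl i) = 2 ↔ (i ≠ a ∧ i ∉ C₁) := by
    intro i; rw [hf₃def]; simp only [Sum.elim_inl]
    by_cases h1 : i = a <;> by_cases h2 : i ∈ C₁ <;> simp [h1, h2]
  have h3r1 : ∀ j : Fin n, f₃ (inr j) = 1 ↔ j ∉ C₂ := by
    intro j; rw [hf₃def]; simp only [Sum.elim_inr]
    split_ifs with h1 <;> simp [h1]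
  have h3r2 : ∀ j : Fin n, f₃ (inr j) = 2 ↔ j ∈ C₂ := by
    intro j; rw [hf₃def]; simp only [Sum.elim_inr]
    split_ifs with h1 <;> simp [h1]
  have h2l0 : ∀ i : Fin m, f₂ (inl i) = 0 ↔ i ∈ C₁ := by
    intro i; rw [hf₂def]; simp only [Sum.elim_inl]
    split_ifs with h1 <;> simp [h1]
  have h2l1 : ∀ i : Fin m, f₂ (inl i) = 1 ↔ i ∉ C₁ := by
    intro i; rw [hf₂def]; simp only [Sum.elim_inl]
    split_ifs with h1 <;> simp [h1]
  have h2r0 : ∀ j : Fin n, f₂ (inr j) = 0 ↔ j ∉ C₂ := by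
    intro j; rw [hf₂def]; simp only [Sum.elim_inr]
    split_ifs with h1 <;> simp [h1]
  have h2r1 : ∀ j : Fin n, f₂ (inr j) = 1 ↔ j ∈ C₂ := by
    intro j; rw [hf₂def]; simp only [Sum.elim_inr]
    split_ifs with h1 <;> simp [h1]
  rw [hLHS']
  by_cases ha : a ∈ C₁
  · -- Case `a ∈ C₁`: the fiber 2 part is always connected.
    have hset2 : {v | f₃ v = 2} = {v | f₂ v = 1} := by
      ext v
      cases v with
      | inl i =>
        simp only [Set.mem_setOf_eq, h3l2, h2l1]
        exact ⟨fun h => h.2, fun h => ⟨fun he => h (he ▸ ha), h⟩⟩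
      | inr j => simp only [Set.mem_setOf_eq, h3r2, h2r1]
    have hP2 : (H.induce {v | f₃ v = 2}).Connected := by
      rw [hset2]
      rw [induce_eq_of_adj_on (G' := toGraph (assoc E C₁ C₂)) {v | f₂ v = 1} ?_]
      · exact hQ 1
      · rintro (i | j) hu (i' | j') hv
        · rw [hHdef]
          exact iff_of_false not_toGraph_adj_inl_inl not_toGraph_adj_inl_inl
        · replace hu : i ∉ C₁ := (h2l1 i).mp hu
          replace hv : j' ∈ C₂ := (h2r1 j').mp hv
          rw [hHdef, toGraph_adj_inl_inr, toGraph_adj_inl_inr, hH, hassocC]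
          exact ⟨fun h => ⟨h.1, Or.inr hv⟩,
            fun h => ⟨h.1, fun he => hu (he ▸ ha), Or.inr hv⟩⟩
        · replace hu : j ∈ C₂ := (h2r1 j).mp hu
          replace hv : i' ∉ C₁ := (h2l1 i').mp hv
          rw [hHdef, toGraph_adj_inr_inl, toGraph_adj_inr_inl, hH, hassocC]
          exact ⟨fun h => ⟨h.1, Or.inr hu⟩,
            fun h => ⟨h.1, fun he => hv (he ▸ ha), Or.inr hu⟩⟩
        · rw [hHdef]
          exact iff_of_false not_toGraph_adj_inr_inr not_toGraph_adj_inr_inr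
    rw [and_iff_left hP2]
    -- The fiber 1 part is the induced graph `G[(C₁ \ a) ⊔ N(C₁)]`.
    have key : (H.induce {v | f₃ v = 1}).Connected ↔
        InducedConnected E (C₁.erase a) (nbrR E C₁) := by
      rw [induce_eq_of_adj_on (G' := toGraph E) {v | f₃ v = 1} ?_]
      · have hsetA : {v | f₃ v = 1} =
            (inl '' ↑(C₁.erase a) ∪ inr '' ↑(nbrR E C₁) : Set (Fin m ⊕ Fin n)) := by
          ext v
          cases v with
          | inl i =>
            simp only [Set.mem_setOf_eq, h3l1, Set.mem_union, Set.mem_image,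
              Finset.mem_coe, Finset.mem_erase]
            constructor
            · rintro ⟨h1, h2⟩; exact Or.inl ⟨i, ⟨h1, h2⟩, rfl⟩
            · rintro (⟨i', hi', he⟩ | ⟨j', hj', he⟩)
              · cases he; exact hi'
              · exact absurd he (by simp)
          | inr j =>
            simp only [Set.mem_setOf_eq, h3r1, Set.mem_union, Set.mem_image,
              Finset.mem_coe, hNR, Finset.mem_compl]
            constructor
            · intro h; exact Or.inr ⟨j, h, rfl⟩
            · rintro (⟨i', hi', he⟩ | ⟨j', hj', he⟩)
              · exact absurd he (by simp)
              · cases he; exact hj'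
        rw [hsetA]
        rfl
      · rintro (i | j) hu (i' | j') hv
        · rw [hHdef]
          exact iff_of_false not_toGraph_adj_inl_inl not_toGraph_adj_inl_inl
        · obtain ⟨hia, hiC⟩ : i ≠ a ∧ i ∈ C₁ := (h3l1 i).mp hu
          rw [hHdef, toGraph_adj_inl_inr, toGraph_adj_inl_inr, hH]
          exact ⟨fun h => h.1, fun h => ⟨h, hia, Or.inl hiC⟩⟩
        · obtain ⟨hia, hiC⟩ : i' ≠ a ∧ i' ∈ C₁ := (h3l1 i').mp hv
          rw [hHdef, toGraph_adj_inr_inl, toGraph_adj_inr_inl, hH]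
          exact ⟨fun h => h.1, fun h => ⟨h, hia, Or.inl hiC⟩⟩
        · rw [hHdef]
          exact iff_of_false not_toGraph_adj_inr_inr not_toGraph_adj_inr_inr
    rw [key]
    constructor
    · intro h
      refine Or.inr (Or.inr ⟨?_, h⟩)
      rw [hNL, Finset.mem_compl]
      simp [ha]
    · rintro (⟨hC1a, v, hC2v⟩ | ⟨h2a, -⟩ | ⟨-, h3⟩)
      · have hset : (inl '' ↑(C₁.erase a) ∪ inr '' ↑(nbrR E C₁) : Set (Fin m ⊕ Fin n)) =
            {inr v} := by
          rw [hNR, hC1a, hC2v, compl_compl, Finset.erase_singleton]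
          simp
        unfold InducedConnected
        rw [hset]
        exact induce_singleton_connected _ (inr v)
      · exact absurd ha h2a
      · exact h3
  · -- Case `a ∉ C₁`: the fiber 1 part is always connected.
    have hset1 : {v | f₃ v = 1} = {v | f₂ v = 0} := by
      ext v
      cases v with
      | inl i =>
        simp only [Set.mem_setOf_eq, h3l1, h2l0]
        exact ⟨fun h => h.2, fun h => ⟨fun he => ha (he ▸ h), h⟩⟩
      | inr j => simp only [Set.mem_setOf_eq, h3r1, h2r0]
    have hP1 : (H.induce {v | f₃ v = 1}).Connected := by
      rw [hset1]
      rw [induce_eq_of_adj_on (G' := toGraph (assoc E C₁ C₂)) {v | f₂ v = 0} ?_]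
      · exact hQ 0
      · rintro (i | j) hu (i' | j') hv
        · rw [hHdef]
          exact iff_of_false not_toGraph_adj_inl_inl not_toGraph_adj_inl_inl
        · replace hu : i ∈ C₁ := (h2l0 i).mp hu
          rw [hHdef, toGraph_adj_inl_inr, toGraph_adj_inl_inr, hH, hassocC]
          exact ⟨fun h => ⟨h.1, Or.inl hu⟩,
            fun h => ⟨h.1, fun he => ha (he ▸ hu), Or.inl hu⟩⟩
        · replace hv : i' ∈ C₁ := (h2l0 i').mp hv
          rw [hHdef, toGraph_adj_inr_inl, toGraph_adj_inr_inl, hH, hassocC]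
          exact ⟨fun h => ⟨h.1, Or.inl hv⟩,
            fun h => ⟨h.1, fun he => ha (he ▸ hv), Or.inl hv⟩⟩
        · rw [hHdef]
          exact iff_of_false not_toGraph_adj_inr_inr not_toGraph_adj_inr_inr
    rw [and_iff_right hP1]
    -- the fiber 2 part is the induced graph `G[(N(C₂) \ a) ⊔ C₂]`.
    have key : (H.induce {v | f₃ v = 2}).Connected ↔
        InducedConnected E ((nbrL E C₂).erase a) C₂ := by
      rw [induce_eq_of_adj_on (G' := toGraph E) {v | f₃ v = 2} ?_]
      · have hsetB : {v | f₃ v = 2} =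
            (inl '' ↑((nbrL E C₂).erase a) ∪ inr '' ↑C₂ : Set (Fin m ⊕ Fin n)) := by
          ext v
          cases v with
          | inl i =>
            simp only [Set.mem_setOf_eq, h3l2, Set.mem_union, Set.mem_image,
              Finset.mem_coe, Finset.mem_erase, hNL, Finset.mem_compl]
            constructor
            · rintro ⟨h1, h2⟩; exact Or.inl ⟨i, ⟨h1, h2⟩, rfl⟩
            · rintro (⟨i', hi', he⟩ | ⟨j', hj', he⟩)
              · cases he; exact hi'
              · exact absurd he (by simp)
          | inr j =>
            simp only [Set.mem_setOf_eq, h3r2, Set.mem_union, Set.mem_image,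
              Finset.mem_coe]
            constructor
            · intro h; exact Or.inr ⟨j, h, rfl⟩
            · rintro (⟨i', hi', he⟩ | ⟨j', hj', he⟩)
              · exact absurd he (by simp)
              · cases he; exact hj'
        rw [hsetB]
        rfl
      · rintro (i | j) hu (i' | j') hv
        · rw [hHdef]
          exact iff_of_false not_toGraph_adj_inl_inl not_toGraph_adj_inl_inl
        · obtain ⟨hia, -⟩ : i ≠ a ∧ i ∉ C₁ := (h3l2 i).mp hu
          replace hv : j' ∈ C₂ := (h3r2 j').mp hv
          rw [hHdef, toGraph_adj_inl_inr, toGraph_adj_inl_inr, hH]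
          exact ⟨fun h => h.1, fun h => ⟨h, hia, Or.inr hv⟩⟩
        · obtain ⟨hia, -⟩ : i' ≠ a ∧ i' ∉ C₁ := (h3l2 i').mp hv
          replace hu : j ∈ C₂ := (h3r2 j).mp hu
          rw [hHdef, toGraph_adj_inr_inl, toGraph_adj_inr_inl, hH]
          exact ⟨fun h => h.1, fun h => ⟨h, hia, Or.inr hu⟩⟩
        · rw [hHdef]
          exact iff_of_false not_toGraph_adj_inr_inr not_toGraph_adj_inr_inr
    rw [key]
    constructor
    · intro h
      exact Or.inr (Or.inl ⟨ha, h⟩)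
    · rintro (⟨hC1a, -⟩ | ⟨-, h2⟩ | ⟨h3a, -⟩)
      · exact absurd (hC1a ▸ Finset.mem_singleton_self a) ha
      · exact h2
      · rw [hNL, Finset.mem_compl, not_not] at h3a
        exact absurd h3a ha




end ToricBipartite
end

section
/- Let m, n ≥ 2 be integers. In ℤ^{m+n} = ℤ^m × ℤ^n with standard basis vectors e_1,…,e_m of the first factor and f_1,…,f_n of the second factor, let u = Σ_{i=1}^m e_i − Σ_{j=1}^n f_j. Let ∅ ≠ C₁ ⊊ {1,…,m} and ∅ ≠ C₂ ⊊ {1,…,n}, set c = Σ_{i∉C₁} e_i − Σ_{j∈C₂} f_j, and fix i₀ ∈ {1,…,m} ∖ C₁ and j₀ ∈ {1,…,n} ∖ C₂. Then the images of the m+n−1 vectors c, e_i (i ∈ {1,…,m}, i ≠ i₀), and f_j (j ∈ {1,…,n}, j ≠ j₀) in the quotient ℤ-module ℤ^{m+n}/ℤu form a ℤ-basis of ℤ^{m+n}/ℤu. (This is the key lattice computation proving that the toric variety of a connected bipartite graph is smooth in codimension 2: the extremal ray c of the edge cone associated to a two-sided first independent set, together with the indicated standard basis vectors, extends to a ℤ-basis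 of the lattice N = ℤ^{m+n}/ℤu.) -/
/-!
Common setup: a bipartite graph `G ⊆ K_{m,n}` is encoded by an edge relation
`E : Fin m → Fin n → Prop` (vertex set `V = Fin m ⊕ Fin n`, with `U₁` the left
summand and `U₂` the right summand).
-/

namespace ToricBipartite

open Sum Finset

variable {m n : ℕ}

private lemma aux_sum {α : Type*} [Fintype α] [DecidableEq α] {a₀ : α}
    (g : {a : α // a ≠ a₀} → ℤ) (b : α) :
    (∑ x : {a : α // a ≠ a₀}, if b = x.1 then g x else 0)
      = if h : b = a₀ then 0 else g ⟨b, h⟩ := by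
  split_ifs with h
  · subst h
    exact Finset.sum_eq_zero fun x _ => if_neg fun e => x.2 e.symm
  · rw [Finset.sum_eq_single (⟨b, h⟩ : {a : α // a ≠ a₀})
      (fun x _ hx => if_neg fun e => hx (Subtype.ext e.symm))
      (fun hb => absurd (Finset.mem_univ _) hb), if_pos rfl]

/-- Let `m, n ≥ 2`, `u = Σ e_i − Σ f_j ∈ ℤ^{m+n}`, let
`∅ ≠ C₁ ⊊ {1,…,m}`, `∅ ≠ C₂ ⊊ {1,…,n}`, `c = Σ_{i ∉ C₁} e_i − Σ_{j ∈ C₂} f_j`, and fix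
`i₀ ∉ C₁`, `j₀ ∉ C₂`. Then the images of the `m+n−1` vectors `c`, `e_i (i ≠ i₀)`,
`f_j (j ≠ j₀)` in `ℤ^{m+n}/ℤu` form a `ℤ`-basis (linearly independent and spanning). -/
theorem extremal_ray_extends_to_basis (m n : ℕ) (hm : 2 ≤ m) (hn : 2 ≤ n)
    (C₁ : Finset (Fin m)) (C₂ : Finset (Fin n))
    (hC₁ : C₁.Nonempty) (hC₁u : C₁ ≠ Finset.univ)
    (hC₂ : C₂.Nonempty) (hC₂u : C₂ ≠ Finset.univ)
    (i₀ : Fin m) (hi₀ : i₀ ∉ C₁) (j₀ : Fin n) (hj₀ : j₀ ∉ C₂)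
    (u c : (Fin m ⊕ Fin n) → ℤ)
    (hu : u = Sum.elim (fun _ => 1) (fun _ => -1))
    (hc : c = Sum.elim (fun i => if i ∈ C₁ then 0 else 1)
      (fun j => if j ∈ C₂ then -1 else 0))
    (fam : Unit ⊕ {i : Fin m // i ≠ i₀} ⊕ {j : Fin n // j ≠ j₀} →
      ((Fin m ⊕ Fin n) → ℤ) ⧸ Submodule.span ℤ {u})
    (hfam : fam = Sum.elim (fun _ => (Submodule.span ℤ {u}).mkQ c)
      (Sum.elim (fun i => (Submodule.span ℤ {u}).mkQ (Pi.single (inl i.1) 1))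
        (fun j => (Submodule.span ℤ {u}).mkQ (Pi.single (inr j.1) 1)))) :
    LinearIndependent ℤ fam ∧ Submodule.span ℤ (Set.range fam) = ⊤ := by
  classical
  set v : Unit ⊕ {i : Fin m // i ≠ i₀} ⊕ {j : Fin n // j ≠ j₀} → ((Fin m ⊕ Fin n) → ℤ) :=
    Sum.elim (fun _ => c)
      (Sum.elim (fun i => Pi.single (inl i.1) 1) (fun j => Pi.single (inr j.1) 1)) with hv
  have hfameq : fam = fun k => (Submodule.span ℤ {u}).mkQ (v k) := by
    rw [hfam]; funext k; rcases k with ⟨⟩ | i | j <;> rfl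
  have huL : ∀ i, u (inl i) = 1 := fun i => by rw [hu]; rfl
  have huR : ∀ j, u (inr j) = -1 := fun j => by rw [hu]; rfl
  have hcL : ∀ i, c (inl i) = if i ∈ C₁ then 0 else 1 := fun i => by rw [hc]; rfl
  have hcR : ∀ j, c (inr j) = if j ∈ C₂ then -1 else 0 := fun j => by rw [hc]; rfl
  have hLI : LinearIndependent ℤ fam := by
    rw [hfameq, Fintype.linearIndependent_iff]
    intro g hg
    have h0 : (Submodule.span ℤ {u}).mkQ (∑ k, g k • v k) = 0 := by
      rw [map_sum]
      simpa only [map_smul] using hg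
    rw [Submodule.mkQ_apply, Submodule.Quotient.mk_eq_zero,
      Submodule.mem_span_singleton] at h0
    obtain ⟨a, ha⟩ := h0
    have E : ∀ p, a * u p = g (Sum.inl ()) * c p
        + ((∑ x : {i : Fin m // i ≠ i₀}, if p = Sum.inl x.1 then g (Sum.inr (Sum.inl x)) else 0)
          + (∑ x : {j : Fin n // j ≠ j₀}, if p = Sum.inr x.1 then g (Sum.inr (Sum.inr x)) else 0)) := by
      intro p
      have h1 : a * u p = (∑ k, g k • v k) p := by rw [← ha]; rfl
      rw [h1, Finset.sum_apply, Fintype.sum_sum_type, Fintype.sum_sum_type]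
      simp [hv, Pi.single_apply, mul_ite]
    have Ei₀ := E (Sum.inl i₀)
    have Ej₀ := E (Sum.inr j₀)
    rw [huL, hcL i₀, if_neg hi₀] at Ei₀
    rw [huR, hcR j₀, if_neg hj₀] at Ej₀
    simp only [Sum.inl.injEq, Sum.inr.injEq, reduceCtorEq, if_false, aux_sum] at Ei₀ Ej₀
    simp at Ei₀ Ej₀
    have ha0 : a = 0 := by omega
    have hg0 : g (Sum.inl ()) = 0 := by omega
    rintro (⟨⟩ | ⟨i, hi⟩ | ⟨j, hj⟩)
    · exact hg0
    · have Ei := E (Sum.inl i)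
      rw [huL, ha0, hg0] at Ei
      simp only [Sum.inl.injEq, Sum.inr.injEq, reduceCtorEq, if_false, aux_sum,
        dif_neg hi] at Ei
      simpa using Ei.symm
    · have Ej := E (Sum.inr j)
      rw [huR, ha0, hg0] at Ej
      simp only [Sum.inl.injEq, Sum.inr.injEq, reduceCtorEq, if_false, aux_sum,
        dif_neg hj] at Ej
      simpa using Ej.symm
  refine ⟨hLI, ?_⟩
  -- expressions of c and u in terms of standard basis vectors
  have hcexp : c = (∑ i ∈ C₁ᶜ, Pi.single (Sum.inl i) 1)
      - ∑ j ∈ C₂, Pi.single (Sum.inr j) (1:ℤ) := by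
    funext p
    rcases p with i | j
    · rw [Pi.sub_apply, hcL]
      by_cases h : i ∈ C₁ <;>
        simp [h, Finset.sum_apply, Pi.single_apply, Finset.sum_ite_eq, Finset.mem_compl]
    · rw [Pi.sub_apply, hcR]
      by_cases h : j ∈ C₂ <;>
        simp [h, Finset.sum_apply, Pi.single_apply, Finset.sum_ite_eq]
  have huexp : u = (∑ i, Pi.single (Sum.inl i) 1)
      - ∑ j, Pi.single (Sum.inr j) (1:ℤ) := by
    funext p
    rcases p with i | j
    · rw [Pi.sub_apply, huL]
      simp [Finset.sum_apply, Pi.single_apply, Finset.sum_ite_eq]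
    · rw [Pi.sub_apply, huR]
      simp [Finset.sum_apply, Pi.single_apply, Finset.sum_ite_eq]
  set T : Submodule ℤ ((Fin m ⊕ Fin n) → ℤ) :=
    Submodule.span ℤ (insert u (Set.range v)) with hT
  have huT : u ∈ T := Submodule.subset_span (Set.mem_insert _ _)
  have hvT : ∀ k, v k ∈ T := fun k => Submodule.subset_span (Set.mem_insert_of_mem _ ⟨k, rfl⟩)
  have heT : ∀ i, i ≠ i₀ → Pi.single (Sum.inl i) (1:ℤ) ∈ T :=
    fun i h => hvT (Sum.inr (Sum.inl ⟨i, h⟩))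
  have hfT : ∀ j, j ≠ j₀ → Pi.single (Sum.inr j) (1:ℤ) ∈ T :=
    fun j h => hvT (Sum.inr (Sum.inr ⟨j, h⟩))
  have hcT : c ∈ T := hvT (Sum.inl ())
  have hei₀ : Pi.single (Sum.inl i₀) (1:ℤ) ∈ T := by
    have heq : Pi.single (Sum.inl i₀) (1:ℤ)
        = c - (∑ i ∈ C₁ᶜ.erase i₀, Pi.single (Sum.inl i) 1)
          + ∑ j ∈ C₂, Pi.single (Sum.inr j) 1 := by
      rw [hcexp, ← Finset.add_sum_erase _ _ (Finset.mem_compl.2 hi₀)]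
      abel
    rw [heq]
    exact add_mem (sub_mem hcT (Submodule.sum_mem _ fun i hi =>
        heT i (Finset.ne_of_mem_erase hi)))
      (Submodule.sum_mem _ fun j hj => hfT j fun e => hj₀ (e ▸ hj))
  have hsingleL : ∀ i, Pi.single (Sum.inl i) (1:ℤ) ∈ T := by
    intro i
    by_cases h : i = i₀
    · exact h ▸ hei₀
    · exact heT i h
  have hfj₀ : Pi.single (Sum.inr j₀) (1:ℤ) ∈ T := by
    have heq : Pi.single (Sum.inr j₀) (1:ℤ)
        = (∑ i, Pi.single (Sum.inl i) 1)
          - (∑ j ∈ Finset.univ.erase j₀, Pi.single (Sum.inr j) 1) - u := by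
      rw [huexp, ← Finset.add_sum_erase _ _ (Finset.mem_univ j₀)]
      abel
    rw [heq]
    exact sub_mem (sub_mem (Submodule.sum_mem _ fun i _ => hsingleL i)
      (Submodule.sum_mem _ fun j hj => hfT j (Finset.ne_of_mem_erase hj))) huT
  have hsingle : ∀ p, Pi.single p (1:ℤ) ∈ T := by
    rintro (i | j)
    · exact hsingleL i
    · by_cases h : j = j₀
      · exact h ▸ hfj₀
      · exact hfT j h
  have hTtop : T = ⊤ := by
    rw [eq_top_iff, ← (Pi.basisFun ℤ (Fin m ⊕ Fin n)).span_eq, Submodule.span_le]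
    rintro _ ⟨p, rfl⟩
    simpa [Pi.basisFun_apply] using hsingle p
  have hrange : Set.range fam = (Submodule.span ℤ {u}).mkQ '' Set.range v := by
    rw [hfameq]; exact Set.range_comp _ v
  have hmapu : Submodule.map (Submodule.span ℤ {u}).mkQ (Submodule.span ℤ {u}) = ⊥ := by
    rw [eq_bot_iff]
    rintro x ⟨y, hy, rfl⟩
    exact (Submodule.mem_bot ℤ).2 ((Submodule.Quotient.mk_eq_zero _).2 hy)
  rw [hrange, Submodule.span_image]
  calc Submodule.map (Submodule.span ℤ {u}).mkQ (Submodule.span ℤ (Set.range v))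
      = Submodule.map (Submodule.span ℤ {u}).mkQ (Submodule.span ℤ {u} ⊔ Submodule.span ℤ (Set.range v)) := by
        rw [Submodule.map_sup, hmapu, bot_sup_eq]
    _ = Submodule.map (Submodule.span ℤ {u}).mkQ T := by rw [hT, Submodule.span_insert]
    _ = ⊤ := by rw [hTtop, Submodule.map_top, Submodule.range_mkQ]


end ToricBipartite
end
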